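/- Let AC(X) be a decomposable and smooth arithmetic circuit computing the marginals of a factor f(X), with X partitioned into Y and Z. The circuit obtained by setting all indicators λ_z of variables in Z to the constant 1 is a circuit over Y that computes the marginals of the projection g(Y) = Σ_Z f(X). -/

import Mathlib

/-- An arithmetic circuit over variables `ι` with values `α`: leaves are indicator
variables `λ_{i,v}` or real parameters; internal nodes are sums or products. -/
inductive AC (ι α : Type) : Type where
  | ind (i : ι) (v : α)
  | param (θ : ℝ)
  | sum (l r : AC ι α)
  | prod (l r : AC ι α)

namespace AC

variable {ι α : Type} [Fintype ι] [DecidableEq ι] [Fintype α] [DecidableEq α]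

/-- Evaluate the circuit under a circuit input `Λ` assigning 0/1 to each indicator. -/
def eval (Λ : ι → α → Bool) : AC ι α → ℝ
  | ind i v => if Λ i v then 1 else 0
  | param θ => θ
  | sum l r => l.eval Λ + r.eval Λ
  | prod l r => l.eval Λ * r.eval Λ

/-- Evaluate the maximizer circuit (sum nodes replaced by max nodes). -/
def evalMax (Λ : ι → α → Bool) : AC ι α → ℝ
  | ind i v => if Λ i v then 1 else 0
  | param θ => θ
  | sum l r => max (l.evalMax Λ) (r.evalMax Λ)
  | prod l r => l.evalMax Λ * r.evalMax Λ

/-- The circuit input corresponding to a full instantiation `x`. -/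
def inputOf (x : ι → α) : ι → α → Bool := fun i v => decide (x i = v)

/-- The circuit input corresponding to a partial instantiation `y`:
an indicator is set to 1 iff its value is compatible with `y`. -/
def pinputOf (y : ι → Option α) : ι → α → Bool := fun i v =>
  match y i with
  | none => true
  | some w => decide (w = v)

/-- The value `AC(x)` of the circuit at a full instantiation `x`. -/
def evalAt (x : ι → α) (c : AC ι α) : ℝ := c.eval (inputOf x)

/-- The value `AC(y)` of the circuit at a partial instantiation `y`. -/
def evalP (y : ι → Option α) (c : AC ι α) : ℝ := c.eval (pinputOf y)

/-- Maximizer-circuit value at a full instantiation. -/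
def evalMaxAt (x : ι → α) (c : AC ι α) : ℝ := c.evalMax (inputOf x)

/-- Maximizer-circuit value at a partial instantiation. -/
def evalMaxP (y : ι → Option α) (c : AC ι α) : ℝ := c.evalMax (pinputOf y)

/-- `vars n`: variables with some indicator at or under the node. -/
def vars : AC ι α → Finset ι
  | ind i _ => {i}
  | param _ => ∅
  | sum l r => l.vars ∪ r.vars
  | prod l r => l.vars ∪ r.vars

/-- The multiset of parameters appearing in the circuit. -/
def params : AC ι α → Multiset ℝ
  | ind _ _ => 0
  | param θ => {θ}
  | sum l r => l.params + r.params
  | prod l r => l.params + r.params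

/-- Decomposability: children of every `*`-node have disjoint variable sets. -/
def Decomposable : AC ι α → Prop
  | ind _ _ => True
  | param _ => True
  | sum l r => l.Decomposable ∧ r.Decomposable
  | prod l r => Disjoint l.vars r.vars ∧ l.Decomposable ∧ r.Decomposable

/-- Smoothness: every child of a `+`-node mentions the same variables as the node. -/
def Smooth : AC ι α → Prop
  | ind _ _ => True
  | param _ => True
  | sum l r => l.vars = r.vars ∧ l.Smooth ∧ r.Smooth
  | prod l r => l.Smooth ∧ r.Smooth

/-- Determinism: under every full instantiation, every `+`-node has at most one
non-zero input. -/
def Deterministic : AC ι α → Prop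
  | ind _ _ => True
  | param _ => True
  | sum l r => (∀ x : ι → α, l.evalAt x = 0 ∨ r.evalAt x = 0) ∧
      l.Deterministic ∧ r.Deterministic
  | prod l r => l.Deterministic ∧ r.Deterministic

/-- A full instantiation `x` is compatible with a partial instantiation `y`. -/
def Compat (x : ι → α) (y : ι → Option α) : Prop :=
  ∀ i, y i = none ∨ y i = some (x i)

instance (x : ι → α) (y : ι → Option α) : Decidable (Compat x y) := by
  unfold Compat; infer_instance

/-- The graph of a full instantiation, i.e. its term `{(i, x i) | i}`. -/
def graphOf (x : ι → α) : Finset (ι × α) := Finset.univ.image fun i => (i, x i)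

/-- The marginal `Σ_{x ∼ y} f(x)` of a factor `f` at a partial instantiation `y`. -/
def margSum (f : (ι → α) → ℝ) (y : ι → Option α) : ℝ :=
  ∑ x : ι → α, if Compat x y then f x else 0

/-- The circuit computes the factor `f`. -/
def Computes (c : AC ι α) (f : (ι → α) → ℝ) : Prop := ∀ x, c.evalAt x = f x

/-- The circuit computes the marginals of the factor `f`. -/
def ComputesMarginals (c : AC ι α) (f : (ι → α) → ℝ) : Prop :=
  ∀ y : ι → Option α, c.evalP y = margSum f y

/-- The multiset of (term, coefficient) pairs of all complete subcircuits. -/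
def subs : AC ι α → Multiset (Finset (ι × α) × ℝ)
  | ind i v => {({(i, v)}, 1)}
  | param θ => {(∅, θ)}
  | sum l r => l.subs + r.subs
  | prod l r => l.subs.bind fun a => r.subs.map fun b => (a.1 ∪ b.1, a.2 * b.2)

/-- Complete subcircuits of a circuit: choose one child of each `+`-node and all
children of each `*`-node. -/
inductive Sub : AC ι α → Type where
  | ind (i : ι) (v : α) : Sub (AC.ind i v)
  | param (θ : ℝ) : Sub (AC.param θ)
  | sumL {l r : AC ι α} : Sub l → Sub (AC.sum l r)
  | sumR {l r : AC ι α} : Sub r → Sub (AC.sum l r)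
  | prod {l r : AC ι α} : Sub l → Sub r → Sub (AC.prod l r)

/-- The term of a complete subcircuit: the set of indicator values appearing in it. -/
def Sub.term : {c : AC ι α} → Sub c → Finset (ι × α)
  | _, .ind i v => {(i, v)}
  | _, .param _ => ∅
  | _, .sumL s => s.term
  | _, .sumR s => s.term
  | _, .prod s t => s.term ∪ t.term

/-- The coefficient of a complete subcircuit: the product of its parameters. -/
def Sub.coeff : {c : AC ι α} → Sub c → ℝ
  | _, .ind _ _ => 1
  | _, .param θ => θ
  | _, .sumL s => s.coeff
  | _, .sumR s => s.coeff
  | _, .prod s t => s.coeff * t.coeff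


/-- Replace every indicator of a variable in `Z` by the constant parameter `1`. -/
def fixZ (Z : Finset ι) : AC ι α → AC ι α
  | ind i v => if i ∈ Z then param 1 else ind i v
  | param θ => param θ
  | sum l r => sum (fixZ Z l) (fixZ Z r)
  | prod l r => prod (fixZ Z l) (fixZ Z r)

end AC


theorem fixZ_vars {ι α : Type} [DecidableEq ι] (Z : Finset ι) (c : AC ι α) :
    (c.fixZ Z).vars = c.vars \ Z := by
  induction c with
  | ind i v =>
    by_cases h : i ∈ Z
    · simp [AC.fixZ, h, AC.vars, (Finset.sdiff_eq_empty_iff_subset).mpr (Finset.singleton_subset_iff.mpr h)]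
    · simp [AC.fixZ, h, AC.vars,
        (Finset.sdiff_eq_self_iff_disjoint).mpr (Finset.disjoint_singleton_left.mpr h)]
  | param θ => simp [AC.fixZ, AC.vars]
  | sum l r ihl ihr => simp [AC.fixZ, AC.vars, ihl, ihr, Finset.union_sdiff_distrib]
  | prod l r ihl ihr => simp [AC.fixZ, AC.vars, ihl, ihr, Finset.union_sdiff_distrib]

/-- Setting the indicators of variables `Z` to `1` in a decomposable and smooth
circuit that computes the marginals of `f` yields a circuit over the remaining
variables `Y` that computes the marginals of the projection `g(Y) = Σ_Z f`. -/
theorem stmt14 {ι α : Type} [Fintype ι] [DecidableEq ι] [Fintype α] [DecidableEq α]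
    (c : AC ι α) (hd : c.Decomposable) (hs : c.Smooth) (hv : c.vars = Finset.univ)
    (f : (ι → α) → ℝ) (hf : ∀ x, 0 ≤ f x) (hm : c.ComputesMarginals f)
    (Z : Finset ι) :
    (c.fixZ Z).vars = Finset.univ \ Z ∧
    ∀ y : ι → Option α, (∀ i ∈ Z, y i = none) →
      (c.fixZ Z).evalP y = AC.margSum f y := by
  constructor
  · rw [fixZ_vars, hv]
  · intro y hy
    have heval : ∀ d : AC ι α, (d.fixZ Z).evalP y = d.evalP y := by
      intro d
      induction d with
      | ind i v =>
        simp only [AC.fixZ, AC.evalP]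
        by_cases h : i ∈ Z
        · simp only [h, if_true, AC.eval, AC.pinputOf, hy i h]
        · simp [h]
      | param θ => rfl
      | sum l r ihl ihr => simp only [AC.fixZ, AC.evalP, AC.eval] at *; rw [ihl, ihr]
      | prod l r ihl ihr => simp only [AC.fixZ, AC.evalP, AC.eval] at *; rw [ihl, ihr]
    rw [heval, hm y]
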